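/- Let k ≥ 1 and r ≥ 1 be integers. Then Σ_{q=0}^{2k−1} Σ_{s=0}^{⌈q/2⌉} F(k,r,s,q) = 3(2k+2r+3)/(2k+1) − 3·(2r+3)!!·(2k−1)!!/(2k+2r+1)!!, an identity of rational numbers. -/

import Mathlib

open Finset




private lemma pascal' (n j : ℕ) : (n + 1).choose (j + 1) = n.choose j + n.choose (j + 1) :=
  Nat.choose_succ_succ n j

/-- lower-index Vandermonde -/
private lemma vander (a : ℕ) : ∀ M b : ℕ,
    ∑ q ∈ range (M+1), ((M - q) + a).choose a * q.choose b
      = (M + a + 1).choose (a + b + 1) := by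
  intro M
  induction M with
  | zero =>
    intro b
    cases b with
    | zero => simp
    | succ b => simp [Nat.choose_eq_zero_of_lt (by omega : a + 1 < a + (b+1) + 1)]
  | succ M ih =>
    intro b
    rw [Finset.sum_range_succ']
    have hc : ∀ i ∈ range (M+1), ((M + 1 - (i+1)) + a).choose a * (i+1).choose b
        = ((M - i) + a).choose a * (i+1).choose b := by
      intro i hi; congr 2; omega
    rw [Finset.sum_congr rfl hc]
    cases b with
    | zero =>
      have hp : (M + a + 1 + 1).choose (a + 0 + 1) = (M+a+1).choose a + (M+a+1).choose (a+0+1) :=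
        pascal' (M+a+1) (a+0)
      have h0 : M + 1 - 0 + a = M + a + 1 := by omega
      have h1 : M + 1 + a + 1 = M + a + 1 + 1 := by omega
      simp only [Nat.choose_zero_right, h0, h1, hp]
      have := ih 0
      simp only [Nat.choose_zero_right] at this
      omega
    | succ b =>
      have hcc : ∀ i ∈ range (M+1), ((M - i) + a).choose a * (i+1).choose (b+1)
          = ((M - i) + a).choose a * i.choose b + ((M - i) + a).choose a * i.choose (b+1) := by
        intro i _; rw [pascal' i b]; ring
      rw [Finset.sum_congr rfl hcc, Finset.sum_add_distrib, ih b, ih (b+1)]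
      have hz : (0:ℕ).choose (b+1) = 0 := Nat.choose_eq_zero_of_lt (by omega)
      have hp : (M + a + 1 + 1).choose (a + b + 1 + 1)
          = (M+a+1).choose (a+b+1) + (M+a+1).choose (a+b+1+1) := pascal' (M+a+1) (a+b+1)
      have h1 : M + 1 + a + 1 = M + a + 1 + 1 := by omega
      have h2 : a + (b+1) + 1 = a + b + 1 + 1 := by omega
      rw [hz, h1, h2, hp, Nat.mul_zero, Nat.add_zero]

private lemma hstick1 (c : ℕ) : ∀ n : ℕ,
    ∑ s ∈ range (n+1), (s + c).choose c = (n + c + 1).choose (c + 1) := by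
  intro n
  induction n with
  | zero => simp
  | succ n ih =>
    rw [Finset.sum_range_succ, ih, show n + 1 + c + 1 = (n + c + 1) + 1 by ring,
      pascal' (n+c+1) c, show n + 1 + c = n + c + 1 by ring]
    omega

private lemma hstick2 (c : ℕ) : ∀ k : ℕ,
    ∑ s ∈ range (k+1), (k + 1 - s) * (s + c).choose c = (k + c + 2).choose (c + 2) := by
  intro k
  induction k with
  | zero => simp
  | succ k ih =>
    have hsplit : ∀ s ∈ range (k+2), (k + 2 - s) * (s + c).choose c
        = (k + 1 - s) * (s + c).choose c + (s + c).choose c := by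
      intro s hs
      simp only [Finset.mem_range] at hs
      have : k + 2 - s = (k + 1 - s) + 1 := by omega
      rw [this]; ring
    rw [Finset.sum_congr rfl hsplit, Finset.sum_add_distrib, Finset.sum_range_succ _ (k+1),
      ih, Nat.sub_self, Nat.zero_mul, Nat.add_zero, hstick1 c (k+1),
      show k + 1 + c + 2 = (k + c + 2) + 1 by ring,
      show c + 2 = (c + 1) + 1 by ring,
      pascal' (k+c+2) (c+1), show k + 1 + c + 1 = k + c + 2 by ring]
    omega

private lemma hch22 (r : ℕ) : (2*r+2).choose (2*r) = (r+1)*(2*r+1) := by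
  have h := Nat.choose_symm (show 2 ≤ 2*r+2 by omega)
  rw [show 2*r+2-2 = 2*r by omega] at h
  rw [h, Nat.choose_two_right, show 2*r+2-1 = 2*r+1 by omega,
    show (2*r+2)*(2*r+1) = ((r+1)*(2*r+1))*2 by ring]
  exact Nat.mul_div_cancel _ (by omega)

private lemma hch21 (r : ℕ) : (2*r+1).choose (2*r) = 2*r+1 := by
  have h := Nat.choose_symm (show 1 ≤ 2*r+1 by omega)
  rw [show 2*r+1-1 = 2*r by omega] at h
  rw [h, Nat.choose_one_right]

private lemma doddQ (n : ℕ) :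
    ((2*n+1).doubleFactorial : ℚ) = ((2*n+1).factorial : ℚ) / (2^n * n.factorial) := by
  have h1 : (2*n+1).factorial = (2*n+1).doubleFactorial * (2*n).doubleFactorial :=
    Nat.factorial_eq_mul_doubleFactorial (2*n)
  have h2 : (2*n).doubleFactorial = 2^n * n.factorial := Nat.doubleFactorial_two_mul n
  rw [eq_div_iff (by positivity)]
  rw [h2] at h1
  exact_mod_cast congrArg (fun x : ℕ => (x:ℚ)) h1.symm





/-- The hypergeometric summand
`F(k,r,s,q) = [6(2k+2r−q+2)!·q!·(r+s−1)!·(2k−2s)!·(k−s+1)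
  / ((2k+2r+2)!·(2k−q+2)!·(q−2s+1)!·s!·(r−1)!)]
  · [(q−2s+1)(2r+2s+1) − 2s(2k−2s+3)]`. -/
def Ffun (k r s q : ℕ) : ℚ :=
  ((6 * (2*k+2*r+2-q).factorial * q.factorial * (r-1+s).factorial
      * (2*k-2*s).factorial * (k+1-s) : ℕ) : ℚ)
  / (((2*k+2*r+2).factorial * (2*k+2-q).factorial * (q+1-2*s).factorial
      * s.factorial * (r-1).factorial : ℕ) : ℚ)
  * ((((q+1-2*s) * (2*r+2*s+1) : ℕ) : ℚ) - ((2*s*(2*k+3-2*s) : ℕ) : ℚ))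


def aaN (k r s : ℕ) : ℕ :=
  6 * (r-1+s).factorial * (2*k-2*s).factorial * (k+1-s) * (2*r+2*s+1)
    * (2*r).factorial * (2*s).factorial

def bbN (k r s : ℕ) : ℕ :=
  6 * (r-1+s).factorial * (2*k-2*s).factorial * (k+1-s) * (2*s*(2*k+3-2*s))
    * (2*r).factorial * (2*s-1).factorial

def Dden (k r s : ℕ) : ℕ := (2*k+2*r+2).factorial * s.factorial * (r-1).factorial

def Gfun (k r s q : ℕ) : ℚ :=
  ((aaN k r s * (2*k+2*r+2-q).choose (2*r) * q.choose (2*s) : ℕ) : ℚ) / (Dden k r s : ℚ)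
  - ((bbN k r s * (2*k+2*r+2-q).choose (2*r) * q.choose (2*s-1) : ℕ) : ℚ) / (Dden k r s : ℚ)


lemma FG (k r s q : ℕ) (h1 : 2*s ≤ q+1) (h2 : q < 2*k) :
    Ffun k r s q = Gfun k r s q := by
  obtain ⟨u, hu, hu3⟩ : ∃ u, 2*k+2 = q + u ∧ 3 ≤ u := ⟨2*k+2-q, by omega, by omega⟩
  have hs1 : 2*k+2-q = u := by omega
  have hs2 : 2*k+2*r+2-q = 2*r+u := by omega
  have hA : (2*r+u).choose (2*r) * (2*r).factorial * u.factorial = (2*r+u).factorial := by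
    have := Nat.choose_mul_factorial_mul_factorial (show 2*r ≤ 2*r+u by omega)
    simpa using this
  have hDne : (((2*k+2*r+2).factorial * (2*k+2-q).factorial * (q+1-2*s).factorial
      * s.factorial * (r-1).factorial : ℕ) : ℚ) ≠ 0 := by positivity
  have hDdne : ((Dden k r s : ℕ) : ℚ) ≠ 0 := by unfold Dden; positivity
  unfold Ffun Gfun
  set N : ℕ := 6 * (2*k+2*r+2-q).factorial * q.factorial * (r-1+s).factorial
      * (2*k-2*s).factorial * (k+1-s) with hN
  set D : ℕ := (2*k+2*r+2).factorial * (2*k+2-q).factorial * (q+1-2*s).factorial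
      * s.factorial * (r-1).factorial with hD
  have eqX : ((N:ℚ)/(D:ℚ)) * (((q+1-2*s) * (2*r+2*s+1) : ℕ) : ℚ)
      = ((aaN k r s * (2*k+2*r+2-q).choose (2*r) * q.choose (2*s) : ℕ) : ℚ) / (Dden k r s : ℚ) := by
    rw [div_mul_eq_mul_div, div_eq_div_iff hDne hDdne]
    have key : N * ((q+1-2*s) * (2*r+2*s+1)) * Dden k r s
        = aaN k r s * (2*k+2*r+2-q).choose (2*r) * q.choose (2*s) * D := by
      rcases Nat.lt_or_ge q (2*s) with hq | hq
      · -- 2*s = q+1 case : both sides vanish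
        have hq1 : q + 1 = 2*s := by omega
        have hz1 : q + 1 - 2*s = 0 := by omega
        have hz2 : q.choose (2*s) = 0 := Nat.choose_eq_zero_of_lt (by omega)
        rw [hz1, hz2]; ring
      · obtain ⟨d, hd⟩ : ∃ d, q = 2*s + d := ⟨q - 2*s, by omega⟩
        have hd1 : q + 1 - 2*s = d + 1 := by omega
        have hB : q.choose (2*s) * (2*s).factorial * d.factorial = q.factorial := by
          have := Nat.choose_mul_factorial_mul_factorial (show 2*s ≤ q by omega)
          rw [show q - 2*s = d by omega] at this
          exact this
        unfold aaN Dden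
        rw [hN, hD, hs2, hs1, hd1, ← hA, ← hB, Nat.factorial_succ d]
        ring
    exact_mod_cast congrArg (fun x : ℕ => (x : ℚ)) key
  have eqY : ((N:ℚ)/(D:ℚ)) * ((2*s*(2*k+3-2*s) : ℕ) : ℚ)
      = ((bbN k r s * (2*k+2*r+2-q).choose (2*r) * q.choose (2*s-1) : ℕ) : ℚ) / (Dden k r s : ℚ) := by
    rw [div_mul_eq_mul_div, div_eq_div_iff hDne hDdne]
    have key : N * (2*s*(2*k+3-2*s)) * Dden k r s
        = bbN k r s * (2*k+2*r+2-q).choose (2*r) * q.choose (2*s-1) * D := by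
      rcases Nat.eq_zero_or_pos s with hs0 | hs0
      · subst hs0; unfold bbN; ring_nf
      · obtain ⟨σ, hσ⟩ : ∃ σ, s = σ + 1 := ⟨s - 1, by omega⟩
        have h2s1 : 2*s - 1 = 2*σ + 1 := by omega
        obtain ⟨e, he⟩ : ∃ e, q = (2*σ+1) + e := ⟨q - (2*σ+1), by omega⟩
        have he1 : q + 1 - 2*s = e := by omega
        have hB : q.choose (2*σ+1) * (2*σ+1).factorial * e.factorial = q.factorial := by
          have := Nat.choose_mul_factorial_mul_factorial (show 2*σ+1 ≤ q by omega)
          rw [show q - (2*σ+1) = e by omega] at this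
          exact this
        unfold bbN Dden
        rw [hN, hD, hs2, hs1, he1, h2s1, ← hA, ← hB]
        ring
    exact_mod_cast congrArg (fun x : ℕ => (x : ℚ)) key
  rw [mul_sub, eqX, eqY]


lemma Gvanish (k r s q : ℕ) (h : q + 1 < 2*s) : Gfun k r s q = 0 := by
  unfold Gfun
  rw [Nat.choose_eq_zero_of_lt (show q < 2*s by omega),
    Nat.choose_eq_zero_of_lt (show q < 2*s-1 by omega)]
  simp

lemma Mzero (k r s : ℕ) (hs1 : 1 ≤ s) (hsk : s ≤ k) :
    aaN k r s * (2*k+2*r+3).choose (2*r+2*s+1)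
      = bbN k r s * (2*k+2*r+3).choose (2*r+2*s) := by
  obtain ⟨σ, rfl⟩ : ∃ σ, s = σ + 1 := ⟨s - 1, by omega⟩
  set s := σ + 1 with hsdef
  have h : (2*k+2*r+3).choose (2*r+2*s+1) * (2*r+2*s+1)
      = (2*k+2*r+3).choose (2*r+2*s) * (2*k+3-2*s) := by
    have := Nat.choose_succ_right_eq (2*k+2*r+3) (2*r+2*s)
    rwa [show 2*k+2*r+3-(2*r+2*s) = 2*k+3-2*s by omega] at this
  unfold aaN bbN
  have h2s : (2*s).factorial = (2*s) * (2*s-1).factorial := by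
    rw [show 2*s = (2*s-1)+1 by omega, Nat.factorial_succ]
    congr 1 <;> omega
  calc 6 * (r-1+s).factorial * (2*k-2*s).factorial * (k+1-s) * (2*r+2*s+1)
        * (2*r).factorial * (2*s).factorial * (2*k+2*r+3).choose (2*r+2*s+1)
      = (6 * (r-1+s).factorial * (2*k-2*s).factorial * (k+1-s) * (2*r).factorial
          * (2*s) * (2*s-1).factorial) * ((2*k+2*r+3).choose (2*r+2*s+1) * (2*r+2*s+1)) := by
        rw [h2s]; ring
    _ = (6 * (r-1+s).factorial * (2*k-2*s).factorial * (k+1-s) * (2*r).factorial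
          * (2*s) * (2*s-1).factorial) * ((2*k+2*r+3).choose (2*r+2*s) * (2*k+3-2*s)) := by
        rw [h]
    _ = _ := by ring

lemma qsum (k r s : ℕ) (hs : s ≤ k) :
    ∑ q ∈ range (2*k+3), Gfun k r s q
      = ((aaN k r s * (2*k+2*r+3).choose (2*r+2*s+1) : ℕ) : ℚ) / (Dden k r s : ℚ)
        - ((bbN k r s * (2*k+2*r+3).choose (2*r+2*s) : ℕ) : ℚ) / (Dden k r s : ℚ) := by
  unfold Gfun
  rw [Finset.sum_sub_distrib]
  have key : ∀ b : ℕ, ∑ q ∈ range (2*k+3), ((2*k+2*r+2-q).choose (2*r) * q.choose b)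
      = (2*k+2*r+3).choose (2*r+b+1) := by
    intro b
    have hc : ∀ q ∈ range (2*k+3), (2*k+2*r+2-q).choose (2*r) * q.choose b
        = ((2*k+2 - q) + 2*r).choose (2*r) * q.choose b := by
      intro q hq
      simp only [Finset.mem_range] at hq
      congr 2
      omega
    rw [Finset.sum_congr rfl hc, show 2*k+3 = (2*k+2)+1 by ring, vander (2*r) (2*k+2) b,
      show 2*k+2+2*r+1 = 2*k+2*r+3 by ring]
  congr 1
  · rw [← Finset.sum_div]
    congr 1
    have hnat : ∑ q ∈ range (2*k+3), aaN k r s * (2*k+2*r+2-q).choose (2*r) * q.choose (2*s)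
        = aaN k r s * (2*k+2*r+3).choose (2*r+2*s+1) := by
      rw [← key (2*s), Finset.mul_sum]
      exact Finset.sum_congr rfl (fun q _ => by ring)
    rw [← hnat]
    norm_cast
  · rw [← Finset.sum_div]
    congr 1
    rcases Nat.eq_zero_or_pos s with hs0 | hs0
    · subst hs0
      simp [bbN]
    · have hnat : ∑ q ∈ range (2*k+3), bbN k r s * (2*k+2*r+2-q).choose (2*r) * q.choose (2*s-1)
          = bbN k r s * (2*k+2*r+3).choose (2*r+2*s) := by
        rw [show 2*r+2*s = 2*r+(2*s-1)+1 by omega, ← key (2*s-1), Finset.mul_sum]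
        exact Finset.sum_congr rfl (fun q _ => by ring)
      rw [← hnat]
      norm_cast


lemma Bclosed (k r s : ℕ) (hr : 1 ≤ r) (hsk : s ≤ k) :
    Gfun k r s (2*k) + Gfun k r s (2*k+1) + Gfun k r s (2*k+2)
      = ((6 * (2*k).factorial * (2*r+1) * (2*r+3) * (r+1) * (2*r).factorial * (k+1-s)
          * (r-1+s).factorial : ℕ) : ℚ) / (Dden k r s : ℚ) := by
  unfold Gfun
  rw [show 2*k+2*r+2-(2*k) = 2*r+2 by omega, show 2*k+2*r+2-(2*k+1) = 2*r+1 by omega,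
    show 2*k+2*r+2-(2*k+2) = 2*r by omega, hch22, hch21, Nat.choose_self]
  rcases Nat.eq_zero_or_pos s with rfl | hs0
  · -- s = 0
    simp only [aaN, bbN, Nat.mul_zero, Nat.zero_mul, Nat.sub_zero, Nat.add_zero,
      Nat.factorial_zero, Nat.mul_one, Nat.one_mul, Nat.choose_zero_right, mul_zero, zero_mul]
    norm_num
    rw [← add_div, ← add_div]
    congr 1
    push_cast
    ring
  · obtain ⟨σ, rfl⟩ : ∃ σ, s = σ + 1 := ⟨s - 1, by omega⟩
    obtain ⟨t, rfl⟩ : ∃ t, k = (σ+1) + t := ⟨k - (σ+1), by omega⟩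
    obtain ⟨m, rfl⟩ : ∃ m, r = m + 1 := ⟨r - 1, by omega⟩
    have haa : aaN (σ+1+t) (m+1) (σ+1)
        = 6*(m+σ+1).factorial*(2*t).factorial*(t+1)*(2*m+2*σ+5)
          *(2*m+2).factorial*(2*σ+2).factorial := by
      unfold aaN
      rw [show m+1-1+(σ+1) = m+σ+1 by omega, show 2*((σ+1)+t)-2*(σ+1) = 2*t by omega,
        show (σ+1)+t+1-(σ+1) = t+1 by omega, show 2*(m+1)+2*(σ+1)+1 = 2*m+2*σ+5 by omega,
        show 2*(m+1) = 2*m+2 by omega, show 2*(σ+1) = 2*σ+2 by omega]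
    have hbb : bbN (σ+1+t) (m+1) (σ+1)
        = 6*(m+σ+1).factorial*(2*t).factorial*(t+1)*((2*σ+2)*(2*t+3))
          *(2*m+2).factorial*(2*σ+1).factorial := by
      unfold bbN
      rw [show m+1-1+(σ+1) = m+σ+1 by omega, show 2*((σ+1)+t)-2*(σ+1) = 2*t by omega,
        show (σ+1)+t+1-(σ+1) = t+1 by omega,
        show 2*(σ+1)*(2*((σ+1)+t)+3-2*(σ+1)) = (2*σ+2)*(2*t+3) by
          rw [show 2*((σ+1)+t)+3-2*(σ+1) = 2*t+3 by omega]; ring,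
        show 2*(m+1) = 2*m+2 by omega, show 2*(σ+1)-1 = 2*σ+1 by omega]
    have hdd : Dden (σ+1+t) (m+1) (σ+1)
        = (2*σ+2*t+2*m+6).factorial*(σ+1).factorial*m.factorial := by
      unfold Dden
      rw [show 2*((σ+1)+t)+2*(m+1)+2 = 2*σ+2*t+2*m+6 by omega,
        show m+1-1 = m by omega]
    rw [haa, hbb, hdd, show 2*((σ+1)+t)+2 = 2*σ+2*t+4 by omega,
      show 2*((σ+1)+t)+1 = 2*σ+2*t+3 by omega, show 2*((σ+1)+t) = 2*σ+2*t+2 by omega,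
      show 2*(σ+1)-1 = 2*σ+1 by omega, show 2*(σ+1) = 2*σ+2 by omega,
      show m+1-1+(σ+1) = m+σ+1 by omega, show (σ+1)+t+1-(σ+1) = t+1 by omega,
      show m+1+1 = m+2 by omega, show 2*(m+1)+1 = 2*m+3 by omega,
      show 2*(m+1)+3 = 2*m+5 by omega, show 2*(m+1) = 2*m+2 by omega]
    have hc1 : (((2*σ+2*t+2).choose (2*σ+2) : ℕ) : ℚ)
        = ((2*σ+2*t+2).factorial : ℚ) / ((2*σ+2).factorial * (2*t).factorial) := by
      rw [Nat.cast_choose ℚ (show 2*σ+2 ≤ 2*σ+2*t+2 by omega),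
        show 2*σ+2*t+2-(2*σ+2) = 2*t by omega]
    have hc2 : (((2*σ+2*t+3).choose (2*σ+2) : ℕ) : ℚ)
        = ((2*σ+2*t+3).factorial : ℚ) / ((2*σ+2).factorial * (2*t+1).factorial) := by
      rw [Nat.cast_choose ℚ (show 2*σ+2 ≤ 2*σ+2*t+3 by omega),
        show 2*σ+2*t+3-(2*σ+2) = 2*t+1 by omega]
    have hc3 : (((2*σ+2*t+4).choose (2*σ+2) : ℕ) : ℚ)
        = ((2*σ+2*t+4).factorial : ℚ) / ((2*σ+2).factorial * (2*t+2).factorial) := by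
      rw [Nat.cast_choose ℚ (show 2*σ+2 ≤ 2*σ+2*t+4 by omega),
        show 2*σ+2*t+4-(2*σ+2) = 2*t+2 by omega]
    have hc4 : (((2*σ+2*t+2).choose (2*σ+1) : ℕ) : ℚ)
        = ((2*σ+2*t+2).factorial : ℚ) / ((2*σ+1).factorial * (2*t+1).factorial) := by
      rw [Nat.cast_choose ℚ (show 2*σ+1 ≤ 2*σ+2*t+2 by omega),
        show 2*σ+2*t+2-(2*σ+1) = 2*t+1 by omega]
    have hc5 : (((2*σ+2*t+3).choose (2*σ+1) : ℕ) : ℚ)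
        = ((2*σ+2*t+3).factorial : ℚ) / ((2*σ+1).factorial * (2*t+2).factorial) := by
      rw [Nat.cast_choose ℚ (show 2*σ+1 ≤ 2*σ+2*t+3 by omega),
        show 2*σ+2*t+3-(2*σ+1) = 2*t+2 by omega]
    have hc6 : (((2*σ+2*t+4).choose (2*σ+1) : ℕ) : ℚ)
        = ((2*σ+2*t+4).factorial : ℚ) / ((2*σ+1).factorial * (2*t+3).factorial) := by
      rw [Nat.cast_choose ℚ (show 2*σ+1 ≤ 2*σ+2*t+4 by omega),
        show 2*σ+2*t+4-(2*σ+1) = 2*t+3 by omega]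
    have lt1 : ((2*t+1).factorial : ℚ) = (2*t+1) * (2*t).factorial := by
      push_cast [Nat.factorial_succ (2*t)]; ring
    have lt2 : ((2*t+2).factorial : ℚ) = (2*t+2) * ((2*t+1) * (2*t).factorial) := by
      push_cast [show 2*t+2 = (2*t+1)+1 by omega, Nat.factorial_succ, Nat.factorial_succ (2*t)]
      ring
    have lt3 : ((2*t+3).factorial : ℚ) = (2*t+3) * ((2*t+2) * ((2*t+1) * (2*t).factorial)) := by
      push_cast [show 2*t+3 = (2*t+2)+1 by omega, show 2*t+2 = (2*t+1)+1 by omega,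
        Nat.factorial_succ]
      ring
    have lk1 : ((2*σ+2*t+3).factorial : ℚ) = (2*σ+2*t+3) * (2*σ+2*t+2).factorial := by
      push_cast [show 2*σ+2*t+3 = (2*σ+2*t+2)+1 by omega, Nat.factorial_succ]; ring
    have lk2 : ((2*σ+2*t+4).factorial : ℚ)
        = (2*σ+2*t+4) * ((2*σ+2*t+3) * (2*σ+2*t+2).factorial) := by
      push_cast [show 2*σ+2*t+4 = (2*σ+2*t+3)+1 by omega,
        show 2*σ+2*t+3 = (2*σ+2*t+2)+1 by omega, Nat.factorial_succ]
      ring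
    have ls : ((2*σ+2).factorial : ℚ) = (2*σ+2) * (2*σ+1).factorial := by
      push_cast [show 2*σ+2 = (2*σ+1)+1 by omega, Nat.factorial_succ]; ring
    push_cast [hc1, hc2, hc3, hc4, hc5, hc6]
    rw [lt1, lt2, lt3, lk1, lk2, ls]
    have n1 : ((2*t).factorial : ℚ) ≠ 0 := by positivity
    have n2 : ((2*σ+1).factorial : ℚ) ≠ 0 := by positivity
    have n3 : ((2*σ+2*t+2).factorial : ℚ) ≠ 0 := by positivity
    have n4 : ((2*σ+2*t+2*m+6).factorial : ℚ) ≠ 0 := by positivity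
    have n5 : ((σ+1).factorial : ℚ) ≠ 0 := by positivity
    have n6 : (m.factorial : ℚ) ≠ 0 := by positivity
    have n7 : (0:ℚ) < 2*t+1 := by positivity
    have n8 : (0:ℚ) < 2*t+2 := by positivity
    have n9 : (0:ℚ) < 2*t+3 := by positivity
    have n10 : (0:ℚ) < 2*σ+2 := by positivity
    field_simp
    ring


theorem stmt9 (k r : ℕ) (hk : 1 ≤ k) (hr : 1 ≤ r) :
    ∑ q ∈ Finset.range (2*k), ∑ s ∈ Finset.range ((q+1)/2 + 1), Ffun k r s q
      = ((3*(2*k+2*r+3) : ℕ) : ℚ) / ((2*k+1 : ℕ) : ℚ)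
        - 3 * ((2*r+3).doubleFactorial : ℚ) * ((2*k-1).doubleFactorial : ℚ)
            / ((2*k+2*r+1).doubleFactorial : ℚ) := by
  -- Step 1: replace Ffun by Gfun and swap summation order
  have step1 : ∀ q ∈ range (2*k), ∑ s ∈ range ((q+1)/2 + 1), Ffun k r s q
      = ∑ s ∈ range (k+1), Gfun k r s q := by
    intro q hq
    simp only [Finset.mem_range] at hq
    calc ∑ s ∈ range ((q+1)/2 + 1), Ffun k r s q
        = ∑ s ∈ range ((q+1)/2 + 1), Gfun k r s q := by
          refine Finset.sum_congr rfl fun s hs => ?_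
          simp only [Finset.mem_range] at hs
          exact FG k r s q (by omega) hq
      _ = ∑ s ∈ range (k+1), Gfun k r s q := by
          refine Finset.sum_subset (Finset.range_subset_range.mpr (by omega)) fun s hs hns => ?_
          simp only [Finset.mem_range] at hs hns
          exact Gvanish k r s q (by omega)
  rw [Finset.sum_congr rfl step1, Finset.sum_comm]
  -- Step 2: split off boundary terms in q
  have step2 : ∀ s ∈ range (k+1), ∑ q ∈ range (2*k), Gfun k r s q
      = (∑ q ∈ range (2*k+3), Gfun k r s q)
        - (Gfun k r s (2*k) + Gfun k r s (2*k+1) + Gfun k r s (2*k+2)) := by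
    intro s _
    rw [show 2*k+3 = (2*k+1)+1+1 by ring, Finset.sum_range_succ, show (2*k+1)+1 = 2*k+2 by ring,
      Finset.sum_range_succ, Finset.sum_range_succ]
    ring
  rw [Finset.sum_congr rfl step2, Finset.sum_sub_distrib]
  -- Step 3: full q-sums vanish except s = 0
  have step3 : ∑ s ∈ range (k+1), ∑ q ∈ range (2*k+3), Gfun k r s q
      = ((aaN k r 0 * (2*k+2*r+3).choose (2*r+1) : ℕ) : ℚ) / (Dden k r 0 : ℚ) := by
    rw [Finset.sum_eq_single_of_mem 0 (Finset.mem_range.mpr (by omega))]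
    · rw [qsum k r 0 (by omega)]
      have hbb0 : bbN k r 0 = 0 := by simp [bbN]
      rw [hbb0]
      norm_num
    · intro s hs hs0
      simp only [Finset.mem_range] at hs
      rw [qsum k r s (by omega), Mzero k r s (by omega) (by omega)]
      ring
  rw [step3]
  -- Step 4: boundary sums via Bclosed and hockey stick
  have step4 : ∑ s ∈ range (k+1),
      (Gfun k r s (2*k) + Gfun k r s (2*k+1) + Gfun k r s (2*k+2))
      = ((6 * (2*k).factorial * (2*r+1) * (2*r+3) * (r+1) * (2*r).factorial
            * (k+r+1).choose (r+1) : ℕ) : ℚ) / ((2*k+2*r+2).factorial : ℚ) := by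
    have hB : ∀ s ∈ range (k+1),
        Gfun k r s (2*k) + Gfun k r s (2*k+1) + Gfun k r s (2*k+2)
        = ((6 * (2*k).factorial * (2*r+1) * (2*r+3) * (r+1) * (2*r).factorial
            * ((k+1-s) * (s+(r-1)).choose (r-1)) : ℕ) : ℚ) / ((2*k+2*r+2).factorial : ℚ) := by
      intro s hs
      simp only [Finset.mem_range] at hs
      rw [Bclosed k r s hr (by omega)]
      rw [div_eq_div_iff (by unfold Dden; positivity) (by positivity)]
      have hcf : (s+(r-1)).choose (r-1) * (r-1).factorial * s.factorial = (s+(r-1)).factorial := by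
        have := Nat.choose_mul_factorial_mul_factorial (show r-1 ≤ s+(r-1) by omega)
        rwa [show s+(r-1)-(r-1) = s by omega] at this
      have harg : r-1+s = s+(r-1) := by omega
      rw [harg]
      push_cast [← hcf, Dden]
      ring
    rw [Finset.sum_congr rfl hB, ← Finset.sum_div]
    congr 1
    have : ∑ s ∈ range (k+1), ((6 * (2*k).factorial * (2*r+1) * (2*r+3) * (r+1)
          * (2*r).factorial * ((k+1-s) * (s+(r-1)).choose (r-1)) : ℕ) : ℚ)
        = ((6 * (2*k).factorial * (2*r+1) * (2*r+3) * (r+1) * (2*r).factorial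
          * (∑ s ∈ range (k+1), (k+1-s) * (s+(r-1)).choose (r-1)) : ℕ) : ℚ) := by
      push_cast
      rw [Finset.mul_sum]
    rw [this, hstick2 (r-1) k, show k+(r-1)+2 = k+r+1 by omega, show (r-1)+2 = r+1 by omega]
  rw [step4]
  -- Step 5: final closed-form arithmetic
  obtain ⟨K, rfl⟩ : ∃ K, k = K + 1 := ⟨k - 1, by omega⟩
  obtain ⟨m, rfl⟩ : ∃ m, r = m + 1 := ⟨r - 1, by omega⟩
  have E1 : ((aaN (K+1) (m+1) 0 * (2*(K+1)+2*(m+1)+3).choose (2*(m+1)+1) : ℕ) : ℚ)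
        / (Dden (K+1) (m+1) 0 : ℚ)
      = ((3*(2*(K+1)+2*(m+1)+3) : ℕ) : ℚ) / ((2*(K+1)+1 : ℕ) : ℚ) := by
    have haa : aaN (K+1) (m+1) 0
        = 6 * m.factorial * (2*K+2).factorial * (K+2) * (2*m+3) * (2*m+2).factorial := by
      unfold aaN
      rw [show m+1-1+0 = m by omega, show 2*(K+1)-2*0 = 2*K+2 by omega,
        show (K+1)+1-0 = K+2 by omega, show 2*(m+1)+2*0+1 = 2*m+3 by omega,
        show 2*(m+1) = 2*m+2 by omega]
      simp [Nat.factorial_zero]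
    have hdd : Dden (K+1) (m+1) 0 = (2*K+2*m+6).factorial * m.factorial := by
      unfold Dden
      rw [show 2*(K+1)+2*(m+1)+2 = 2*K+2*m+6 by omega, show m+1-1 = m by omega]
      simp [Nat.factorial_zero]
    have hcc : (((2*K+2*m+7).choose (2*m+3) : ℕ) : ℚ)
        = ((2*K+2*m+7).factorial : ℚ) / ((2*m+3).factorial * (2*K+4).factorial) := by
      rw [Nat.cast_choose ℚ (show 2*m+3 ≤ 2*K+2*m+7 by omega),
        show 2*K+2*m+7-(2*m+3) = 2*K+4 by omega]
    rw [haa, hdd, show 2*(K+1)+2*(m+1)+3 = 2*K+2*m+7 by omega,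
      show 2*(m+1)+1 = 2*m+3 by omega]
    push_cast [hcc]
    have l1 : ((2*K+2*m+7).factorial : ℚ) = (2*K+2*m+7) * (2*K+2*m+6).factorial := by
      push_cast [show 2*K+2*m+7 = (2*K+2*m+6)+1 by omega, Nat.factorial_succ]; ring
    have l2 : ((2*m+3).factorial : ℚ) = (2*m+3) * (2*m+2).factorial := by
      push_cast [show 2*m+3 = (2*m+2)+1 by omega, Nat.factorial_succ]; ring
    have l3 : ((2*K+4).factorial : ℚ)
        = (2*K+4) * ((2*K+3) * (2*K+2).factorial) := by
      push_cast [show 2*K+4 = (2*K+3)+1 by omega, show 2*K+3 = (2*K+2)+1 by omega,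
        Nat.factorial_succ]
      ring
    rw [l1, l2, l3]
    have n1 : ((2*K+2).factorial : ℚ) ≠ 0 := by positivity
    have n2 : ((2*m+2).factorial : ℚ) ≠ 0 := by positivity
    have n3 : ((2*K+2*m+6).factorial : ℚ) ≠ 0 := by positivity
    have n4 : (m.factorial : ℚ) ≠ 0 := by positivity
    field_simp
    ring
  have E2 : ((6 * (2*(K+1)).factorial * (2*(m+1)+1) * (2*(m+1)+3) * ((m+1)+1)
        * (2*(m+1)).factorial * ((K+1)+(m+1)+1).choose ((m+1)+1) : ℕ) : ℚ)
        / ((2*(K+1)+2*(m+1)+2).factorial : ℚ)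
      = 3 * ((2*(m+1)+3).doubleFactorial : ℚ) * ((2*(K+1)-1).doubleFactorial : ℚ)
          / ((2*(K+1)+2*(m+1)+1).doubleFactorial : ℚ) := by
    rw [show 2*(K+1)+2*(m+1)+2 = 2*K+2*m+6 by omega,
      show 2*(K+1)+2*(m+1)+1 = 2*(K+m+2)+1 by omega,
      show 2*(m+1)+3 = 2*(m+2)+1 by omega,
      show 2*(K+1)-1 = 2*K+1 by omega,
      show 2*(K+1) = 2*K+2 by omega,
      show (K+1)+(m+1)+1 = K+m+3 by omega, show (m+1)+1 = m+2 by omega,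
      show 2*(m+1)+1 = 2*m+3 by omega, show 2*(m+1) = 2*m+2 by omega,
      doddQ (m+2), doddQ K, doddQ (K+m+2),
      show 2*(m+2)+1 = 2*m+5 by omega, show 2*(K+m+2)+1 = 2*K+2*m+5 by omega]
    have hcc : (((K+m+3).choose (m+2) : ℕ) : ℚ)
        = ((K+m+3).factorial : ℚ) / ((m+2).factorial * (K+1).factorial) := by
      rw [Nat.cast_choose ℚ (show m+2 ≤ K+m+3 by omega),
        show K+m+3-(m+2) = K+1 by omega]
    push_cast [hcc]
    have l1 : ((2*K+2*m+6).factorial : ℚ) = (2*K+2*m+6) * (2*K+2*m+5).factorial := by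
      push_cast [show 2*K+2*m+6 = (2*K+2*m+5)+1 by omega, Nat.factorial_succ]; ring
    have l2 : ((K+m+3).factorial : ℚ) = (K+m+3) * (K+m+2).factorial := by
      push_cast [show K+m+3 = (K+m+2)+1 by omega, Nat.factorial_succ]; ring
    have l3 : ((2*K+2).factorial : ℚ) = (2*K+2) * (2*K+1).factorial := by
      push_cast [show 2*K+2 = (2*K+1)+1 by omega, Nat.factorial_succ]; ring
    have l4 : ((2*m+5).factorial : ℚ)
        = (2*m+5) * ((2*m+4) * ((2*m+3) * (2*m+2).factorial)) := by
      push_cast [show 2*m+5 = (2*m+4)+1 by omega, show 2*m+4 = (2*m+3)+1 by omega,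
        show 2*m+3 = (2*m+2)+1 by omega, Nat.factorial_succ]
      ring
    have l5 : ((K+1).factorial : ℚ) = (K+1) * K.factorial := by
      push_cast [Nat.factorial_succ K]; ring
    have l6 : (2:ℚ)^(K+m+2) = 2^K * 2^(m+2) := by rw [← pow_add]; ring_nf
    rw [l1, l2, l3, l4, l5, l6]
    have n1 : ((2*K+1).factorial : ℚ) ≠ 0 := by positivity
    have n2 : ((2*m+2).factorial : ℚ) ≠ 0 := by positivity
    have n3 : ((2*K+2*m+5).factorial : ℚ) ≠ 0 := by positivity
    have n4 : (K.factorial : ℚ) ≠ 0 := by positivity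
    have n5 : ((m+2).factorial : ℚ) ≠ 0 := by positivity
    have n6 : ((K+m+2).factorial : ℚ) ≠ 0 := by positivity
    have n7 : (2:ℚ)^K ≠ 0 := by positivity
    have n8 : (2:ℚ)^(m+2) ≠ 0 := by positivity
    field_simp
    ring
  rw [E1, E2]
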